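/- Lemma (second part): In the conditional kernel setting, suppose additionally that f_{X^m} is L-Lipschitz, that μ_{0,m} := ∫K_m < ∞ and μ_{1,m} := ∫‖z‖K_m(z)dz < ∞, that f_{X^m}(x^m) > 0, and let X₁, X₂, … be i.i.d. copies of X with, for each n, an index set A₀(n) ⊆ {1,…,n} of size n₀ with n₀/n → q₀ ∈ (0,1). Then for every 0 < α < β < 1/d, the remainder R_n(h) := (n₀h^d)^{-1} Σ_{i∈A₀(n)} E[K((X_i − x)/h) | X_i^m] − (μ_{0,m^c}/(n₀h^{d_m})) Σ_{i∈A₀(n)} K_m((X_i^m − x^m)/h)·f_{X|X^m}(x^{m^c}; x^m) is O_p(h) uniformly for h ∈ [n^{−β}, n^{−α}]: for every ε > 0 there exist C > 0 and N such that for all n ≥ N and all h ∈ [n^{−β}, n^{−α}], P(|R_n(h)| > C·h) ≤ ε. -/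

import Mathlib

open MeasureTheory Filter ProbabilityTheory Finset
open scoped NNReal ENNReal BigOperators Topology

/-- The observed coordinates of a missingness pattern `m ∈ {0,1}^d`
(`m j = false` means feature `j` is observed). -/
abbrev Obs (d : ℕ) (m : Fin d → Bool) : Type := {j : Fin d // m j = false}

/-- The unobserved coordinates of a missingness pattern `m`. -/
abbrev Mis (d : ℕ) (m : Fin d → Bool) : Type := {j : Fin d // m j = true}

/-- Restriction of `x ∈ ℝ^d` to the observed coordinates. -/
def projObs {d : ℕ} (m : Fin d → Bool) (x : Fin d → ℝ) : Obs d m → ℝ := fun j => x j.1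

/-- Restriction of `x ∈ ℝ^d` to the unobserved coordinates. -/
def projMis {d : ℕ} (m : Fin d → Bool) (x : Fin d → ℝ) : Mis d m → ℝ := fun j => x j.1

/-- The vector in `ℝ^d` whose observed part is `zo` and unobserved part is `zc`. -/
def combine {d : ℕ} (m : Fin d → Bool) (zo : Obs d m → ℝ) (zc : Mis d m → ℝ) :
    Fin d → ℝ := fun j =>
  if h : m j = false then zo ⟨j, h⟩ else zc ⟨j, by revert h; cases m j <;> simp⟩

set_option maxHeartbeats 1000000 in
/-- **Lemma, second part.** In the conditional kernel setting, with
`f_{X^m}` also `L`-Lipschitz, `μ_{0,m}, μ_{1,m} < ∞`, `f_{X^m}(x^m) > 0`, and i.i.d.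
copies `X₁, X₂, …` of `X` with index sets `A₀(n)` of size `n₀(n)`, `n₀(n)/n → q₀ ∈ (0,1)`,
the remainder
`R_n(h) := (n₀h^d)⁻¹ Σ_{i∈A₀(n)} E[K((X_i − x)/h) | X_i^m]
   − (μ_{0,m^c}/(n₀h^{d_m})) Σ_{i∈A₀(n)} K_m((X_i^m − x^m)/h)·f_{X|X^m}(x^{m^c}; x^m)`
is `O_p(h)` uniformly for `h ∈ [n^{−β}, n^{−α}]` whenever `0 < α < β < 1/d`: for every
`ε > 0` there exist `C > 0` and `N` such that for all `n ≥ N` and all such `h`,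
`P(|R_n(h)| > C·h) ≤ ε`. -/
theorem stmt15 {Ωs : Type*} [MeasurableSpace Ωs] (P : Measure Ωs) [IsProbabilityMeasure P]
    (d : ℕ) (hd : 1 ≤ d) (m : Fin d → Bool) (hm : m ≠ fun _ => true)
    (X : ℕ → Ωs → Fin d → ℝ) (hXmeas : ∀ i, Measurable (X i))
    (hXindep : iIndepFun X P)
    (hXident : ∀ i, IdentDistrib (X i) (X 0) P P)
    (L : ℝ≥0) (fX : (Fin d → ℝ) → ℝ) (hfX0 : ∀ z, 0 ≤ fX z)
    (hfXdens : Measure.map (X 0) P = volume.withDensity (fun z => ENNReal.ofReal (fX z)))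
    (hfXLip : LipschitzWith L fX)
    (fXm : (Obs d m → ℝ) → ℝ)
    (hfXm : ∀ zm : Obs d m → ℝ, fXm zm = ∫ zc : Mis d m → ℝ, fX (combine m zm zc))
    (hfXmLip : LipschitzWith L fXm)
    (Km : (Obs d m → ℝ) → ℝ) (Kmc : (Mis d m → ℝ) → ℝ)
    (hKm0 : ∀ z, 0 ≤ Km z) (hKmc0 : ∀ z, 0 ≤ Kmc z)
    (hKmmeas : Measurable Km) (hKmcmeas : Measurable Kmc)
    (hKmint : Integrable Km) (hKmnorm : Integrable (fun z => ‖z‖ * Km z))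
    (hKmcint : Integrable Kmc) (hKmcnorm : Integrable (fun z => ‖z‖ * Kmc z))
    (x : Fin d → ℝ) (hx : 0 < fXm (projObs m x))
    (A0 : ℕ → Finset ℕ) (hA0sub : ∀ n, A0 n ⊆ Finset.range n)
    (n0 : ℕ → ℕ) (hn0card : ∀ n, (A0 n).card = n0 n)
    (q0 : ℝ) (hq0 : q0 ∈ Set.Ioo (0 : ℝ) 1)
    (hq0lim : Tendsto (fun n => (n0 n : ℝ) / n) atTop (𝓝 q0))
    (R : ℕ → ℝ → Ωs → ℝ)
    (hR : R = fun n h ω =>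
      (∑ i ∈ A0 n, ∫ zc : Mis d m → ℝ,
          Km (h⁻¹ • (projObs m (X i ω) - projObs m x)) * Kmc (h⁻¹ • (zc - projMis m x))
            * fX (combine m (projObs m (X i ω)) zc) / fXm (projObs m (X i ω)))
        / (n0 n * h ^ d)
      - ((∫ z, Kmc z) / (n0 n * h ^ (Fintype.card (Obs d m))))
          * ∑ i ∈ A0 n, Km (h⁻¹ • (projObs m (X i ω) - projObs m x))
              * (fX x / fXm (projObs m x))) :
    ∀ α β : ℝ, 0 < α → α < β → β < 1 / d →
      ∀ ε : ℝ, 0 < ε → ∃ C : ℝ, 0 < C ∧ ∃ N : ℕ, ∀ n ≥ N,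
        ∀ h ∈ Set.Icc ((n : ℝ) ^ (-β)) ((n : ℝ) ^ (-α)),
          P {ω | C * h < |R n h ω|} ≤ ENNReal.ofReal ε := by
  classical
  intro α β hα hαβ hβd ε hε
  have hL : (0:ℝ) ≤ L := L.coe_nonneg
  have hfXcont : Continuous fX := hfXLip.continuous
  have hfXmcont : Continuous fXm := hfXmLip.continuous
  have hprojObs : Measurable (projObs m) :=
    measurable_pi_lambda _ fun j => measurable_pi_apply _
  have hcombinep : Measurable fun p : (Obs d m → ℝ) × (Mis d m → ℝ) => combine m p.1 p.2 := by
    apply measurable_pi_lambda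
    intro j
    by_cases hj : m j = false
    · simpa [combine, hj, Function.comp_def] using (measurable_pi_apply (⟨j, hj⟩ : Obs d m)).comp measurable_fst
    · have hj' : m j = true := by revert hj; cases m j <;> simp
      simpa [combine, hj, Function.comp_def] using (measurable_pi_apply (⟨j, hj'⟩ : Mis d m)).comp measurable_snd
  have hfXm0 : ∀ zm, 0 ≤ fXm zm := fun zm => by
    rw [hfXm zm]; exact integral_nonneg fun zc => hfX0 _
  have hμ0mc : (0:ℝ) ≤ ∫ z, Kmc z := integral_nonneg hKmc0
  have hμ1mc : (0:ℝ) ≤ ∫ z : Mis d m → ℝ, ‖z‖ * Kmc z :=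
    integral_nonneg fun z => mul_nonneg (norm_nonneg _) (hKmc0 z)
  have hμ0m : (0:ℝ) ≤ ∫ z, Km z := integral_nonneg hKm0
  have hμ1m : (0:ℝ) ≤ ∫ z : Obs d m → ℝ, ‖z‖ * Km z :=
    integral_nonneg fun z => mul_nonneg (norm_nonneg _) (hKm0 z)
  set xm := projObs m x with hxmdef
  set xc := projMis m x with hxcdef
  have hc0 : (0:ℝ) ≤ fX x / fXm xm := div_nonneg (hfX0 x) hx.le
  set KK : ℝ := (L : ℝ) * (((∫ z, Kmc z) * (1 + fX x / fXm xm)) * (∫ z : Obs d m → ℝ, ‖z‖ * Km z)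
      + (∫ z : Mis d m → ℝ, ‖z‖ * Kmc z) * (∫ z, Km z)) with hKKdef
  have hKK : 0 ≤ KK := by
    apply mul_nonneg hL
    apply add_nonneg
    · exact mul_nonneg (mul_nonneg hμ0mc (by linarith)) hμ1m
    · exact mul_nonneg hμ1mc hμ0m
  have hcard : Fintype.card (Obs d m) + Fintype.card (Mis d m) = d := by
    have h1 : Fintype.card (Mis d m) = Fintype.card {j : Fin d // ¬ m j = false} :=
      Fintype.card_congr (Equiv.subtypeEquivRight fun j => by simp)
    have h2 : Fintype.card {j : Fin d // m j = false}
        + Fintype.card {j : Fin d // ¬ m j = false} = Fintype.card (Fin d) := by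
      rw [← Fintype.card_sum]
      exact Fintype.card_congr (Equiv.sumCompl _)
    have h3 : Fintype.card (Obs d m) = Fintype.card {j : Fin d // m j = false} :=
      Fintype.card_congr (Equiv.refl _)
    simp only [Fintype.card_fin] at h2
    omega
  refine ⟨max (KK / ε) 1, lt_of_lt_of_le one_pos (le_max_right _ _), 1, ?_⟩
  intro n hn h hh
  have hn' : (0:ℝ) < n := by exact_mod_cast hn
  have hh0 : 0 < h := lt_of_lt_of_le (Real.rpow_pos_of_pos hn' _) hh.1
  set dm := Fintype.card (Obs d m) with hdmdef
  set dmc := Fintype.card (Mis d m) with hdmcdef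
  -- the one-point functions
  set F : (Obs d m → ℝ) → ℝ :=
    fun zm => ∫ zc : Mis d m → ℝ, Kmc (h⁻¹ • (zc - xc)) * fX (combine m zm zc) with hFdef
  set Φ : (Obs d m → ℝ) → ℝ := fun zm =>
    Km (h⁻¹ • (zm - xm)) / fXm zm * F zm / h ^ d
      - (∫ z, Kmc z) / h ^ dm * (Km (h⁻¹ • (zm - xm)) * (fX x / fXm xm)) with hΦdef
  have hFmeas : Measurable F := by
    have hsm : StronglyMeasurable fun p : (Obs d m → ℝ) × (Mis d m → ℝ) =>
        Kmc (h⁻¹ • (p.2 - xc)) * fX (combine m p.1 p.2) := by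
      apply Measurable.stronglyMeasurable
      exact ((hKmcmeas.comp (((measurable_snd.sub measurable_const)).const_smul h⁻¹)).mul
        ((hfXcont.measurable).comp hcombinep))
    exact hsm.integral_prod_right'.measurable
  have hΦmeas : Measurable Φ := by
    apply Measurable.sub
    · exact (((hKmmeas.comp ((measurable_id.sub measurable_const).const_smul h⁻¹)).div
        hfXmcont.measurable).mul hFmeas).div_const _
    · exact (((hKmmeas.comp
        ((measurable_id.sub measurable_const).const_smul h⁻¹)).mul_const _).const_mul _)
  -- rewrite R in terms of Φ
  have hRw : ∀ ω, R n h ω = (n0 n : ℝ)⁻¹ * ∑ i ∈ A0 n, Φ (projObs m (X i ω)) := by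
    intro ω
    have key : ∀ zm : Obs d m → ℝ,
        (∫ zc : Mis d m → ℝ, Km (h⁻¹ • (zm - xm)) * Kmc (h⁻¹ • (zc - xc))
          * fX (combine m zm zc) / fXm zm)
        = Km (h⁻¹ • (zm - xm)) / fXm zm * F zm := by
      intro zm
      have h1 : Km (h⁻¹ • (zm - xm)) / fXm zm * F zm
          = ∫ zc : Mis d m → ℝ, Km (h⁻¹ • (zm - xm)) / fXm zm
              * (Kmc (h⁻¹ • (zc - xc)) * fX (combine m zm zc)) :=
        (integral_const_mul _ _).symm
      rw [h1]
      congr 1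
      funext zc
      ring
    rw [hR]
    simp only [key, hΦdef]
    rw [Finset.sum_sub_distrib, ← Finset.sum_div, ← Finset.mul_sum]
    ring
  -- product decomposition of ℝ^d
  set σe : {j : Fin d // ¬ m j = false} ≃ Mis d m :=
    Equiv.subtypeEquivRight (fun j => by simp) with hσedef
  set e : (Fin d → ℝ) ≃ᵐ ((Obs d m → ℝ) × (Mis d m → ℝ)) :=
    (MeasurableEquiv.piEquivPiSubtypeProd (fun _ : Fin d => ℝ) (fun j => m j = false)).trans
      ((MeasurableEquiv.refl (Obs d m → ℝ)).prodCongr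
        (MeasurableEquiv.piCongrLeft (fun _ => ℝ) σe)) with hedef
  have hep : MeasurePreserving e volume volume := by
    have h1 := volume_preserving_piEquivPiSubtypeProd (fun _ : Fin d => ℝ) (fun j => m j = false)
    have h2 : MeasurePreserving
        ((MeasurableEquiv.refl (Obs d m → ℝ)).prodCongr
          (MeasurableEquiv.piCongrLeft (fun _ : Mis d m => ℝ) σe)) volume volume :=
      (MeasurePreserving.id (volume : Measure (Obs d m → ℝ))).prod
        (volume_measurePreserving_piCongrLeft (fun _ : Mis d m => ℝ) σe)
    exact h2.comp h1
  have happly : ∀ z : Fin d → ℝ, e z = (projObs m z, projMis m z) := by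
    intro z
    rw [hedef]
    apply Prod.ext
    · rfl
    · show (MeasurableEquiv.piCongrLeft (fun _ => ℝ) σe) _ = _
      funext b
      rw [MeasurableEquiv.coe_piCongrLeft]
      simp [Equiv.piCongrLeft_apply_eq_cast, Equiv.piEquivPiSubtypeProd, projMis]
      rfl
  have hsymm : ∀ (zm : Obs d m → ℝ) (zc : Mis d m → ℝ),
      e.symm (zm, zc) = combine m zm zc := by
    intro zm zc
    have h1 : e (combine m zm zc) = (zm, zc) := by
      rw [happly]
      apply Prod.ext
      · funext j
        simp [projObs, combine, j.2]
      · funext j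
        have hj : ¬ (m j.1 = false) := by rw [j.2]; simp
        simp [projMis, combine, hj]
    rw [← h1, MeasurableEquiv.symm_apply_apply]
  have hhne : h ≠ 0 := hh0.ne'
  have hfinrc : Module.finrank ℝ (Mis d m → ℝ) = dmc := Module.finrank_fintype_fun_eq_card ℝ
  have hfinro : Module.finrank ℝ (Obs d m → ℝ) = dm := Module.finrank_fintype_fun_eq_card ℝ
  set S : (Obs d m → ℝ) → ℝ :=
    fun zm => ∫ w : Mis d m → ℝ, Kmc w * fX (combine m zm (h • w + xc)) with hSdef
  have hFS : ∀ zm, F zm = h ^ dmc * S zm := by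
    intro zm
    have h1 : F zm = ∫ v : Mis d m → ℝ, Kmc (h⁻¹ • v) * fX (combine m zm (v + xc)) := by
      show (∫ zc : Mis d m → ℝ, Kmc (h⁻¹ • (zc - xc)) * fX (combine m zm zc)) = _
      have h0 := integral_add_right_eq_self (μ := volume)
        (fun v : Mis d m → ℝ => Kmc (h⁻¹ • (v - xc)) * fX (combine m zm v)) xc
      rw [← h0]
      congr 1; funext v; rw [add_sub_cancel_right]
    have h2 := Measure.integral_comp_inv_smul_of_nonneg (volume : Measure (Mis d m → ℝ))
      (fun w : Mis d m → ℝ => Kmc w * fX (combine m zm (h • w + xc))) hh0.le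
    rw [hfinrc] at h2
    have h3 : (∫ v : Mis d m → ℝ, Kmc (h⁻¹ • v) * fX (combine m zm (v + xc)))
        = ∫ v : Mis d m → ℝ,
          (fun w : Mis d m → ℝ => Kmc w * fX (combine m zm (h • w + xc))) (h⁻¹ • v) := by
      congr 1; funext v; simp only []; rw [smul_inv_smul₀ hhne]
    rw [h1, h3, h2, smul_eq_mul, hSdef]
  set ψ : (Obs d m → ℝ) → ℝ := fun zm => Km (h⁻¹ • (zm - xm)) / h ^ dm
      * ((L:ℝ) * ((∫ z, Kmc z) * (1 + fX x / fXm xm) * ‖zm - xm‖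
          + h * (∫ z : Mis d m → ℝ, ‖z‖ * Kmc z))) with hψdef
  have hψ0 : ∀ zm, 0 ≤ ψ zm := fun zm =>
    mul_nonneg (div_nonneg (hKm0 _) (pow_nonneg hh0.le _))
      (mul_nonneg hL (add_nonneg
        (mul_nonneg (mul_nonneg hμ0mc (by linarith)) (norm_nonneg _))
        (mul_nonneg hh0.le hμ1mc)))
  have hpoint : ∀ zm, fXm zm * |Φ zm| ≤ ψ zm := by
    intro zm
    rcases eq_or_lt_of_le (hfXm0 zm) with h0 | hpos
    · rw [← h0, zero_mul]; exact hψ0 zm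
    have hdom : Integrable (fun w : Mis d m → ℝ =>
        (L:ℝ) * ‖zm - xm‖ * Kmc w + (L:ℝ) * h * (‖w‖ * Kmc w)) :=
      (hKmcint.const_mul _).add (hKmcnorm.const_mul _)
    have hgmeas : AEStronglyMeasurable (fun w : Mis d m → ℝ =>
        Kmc w * (fX (combine m zm (h • w + xc)) - fX x)) volume := by
      apply Measurable.aestronglyMeasurable
      apply hKmcmeas.mul
      apply (hfXcont.measurable.comp ?_).sub measurable_const
      exact hcombinep.comp (measurable_const.prodMk
        ((measurable_id.const_smul h).add_const xc))
    have hnormb : ∀ w : Mis d m → ℝ,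
        ‖combine m zm (h • w + xc) - x‖ ≤ ‖zm - xm‖ + h * ‖w‖ := by
      intro w
      have hcomb : combine m zm (h • w + xc) - x = combine m (zm - xm) (h • w) := by
        funext j
        by_cases hj : m j = false
        · simp [combine, hj, hxmdef, projObs]
        · simp [combine, hj, hxcdef, projMis]
      rw [hcomb]
      have hr : (0:ℝ) ≤ ‖zm - xm‖ + h * ‖w‖ :=
        add_nonneg (norm_nonneg _) (mul_nonneg hh0.le (norm_nonneg _))
      refine (pi_norm_le_iff_of_nonneg hr).mpr fun j => ?_
      by_cases hj : m j = false
      · have h1 : combine m (zm - xm) (h • w) j = (zm - xm) ⟨j, hj⟩ := by simp [combine, hj]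
        rw [h1]
        exact le_trans (norm_le_pi_norm (zm - xm) ⟨j, hj⟩)
          (le_add_of_nonneg_right (mul_nonneg hh0.le (norm_nonneg _)))
      · have hj' : m j = true := by revert hj; cases m j <;> simp
        have h1 : combine m (zm - xm) (h • w) j = (h • w) ⟨j, hj'⟩ := by simp [combine, hj]
        rw [h1]
        have h2 : ‖(h • w) (⟨j, hj'⟩ : Mis d m)‖ ≤ ‖h • w‖ := norm_le_pi_norm (h • w) _
        have h3 : ‖h • w‖ = h * ‖w‖ := by
          rw [norm_smul, Real.norm_eq_abs, abs_of_pos hh0]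
        exact le_trans (h3 ▸ h2) (le_add_of_nonneg_left (norm_nonneg _))
    have hgle' : ∀ w : Mis d m → ℝ, ‖Kmc w * (fX (combine m zm (h • w + xc)) - fX x)‖
        ≤ (L:ℝ) * ‖zm - xm‖ * Kmc w + (L:ℝ) * h * (‖w‖ * Kmc w) := by
      intro w
      have h1 : |fX (combine m zm (h • w + xc)) - fX x| ≤ (L:ℝ) * (‖zm - xm‖ + h * ‖w‖) := by
        have h2 := hfXLip.dist_le_mul (combine m zm (h • w + xc)) x
        rw [Real.dist_eq, dist_eq_norm] at h2
        exact h2.trans (mul_le_mul_of_nonneg_left (hnormb w) hL)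
      have h2 : (0:ℝ) ≤ (L:ℝ) * ‖zm - xm‖ * Kmc w + (L:ℝ) * h * (‖w‖ * Kmc w) :=
        add_nonneg (mul_nonneg (mul_nonneg hL (norm_nonneg _)) (hKmc0 w))
          (mul_nonneg (mul_nonneg hL hh0.le) (mul_nonneg (norm_nonneg _) (hKmc0 w)))
      rw [Real.norm_eq_abs, abs_mul, abs_of_nonneg (hKmc0 w)]
      calc Kmc w * |fX (combine m zm (h • w + xc)) - fX x|
          ≤ Kmc w * ((L:ℝ) * (‖zm - xm‖ + h * ‖w‖)) :=
            mul_le_mul_of_nonneg_left h1 (hKmc0 w)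
        _ = (L:ℝ) * ‖zm - xm‖ * Kmc w + (L:ℝ) * h * (‖w‖ * Kmc w) := by ring
    have hgle : ∀ w : Mis d m → ℝ, ‖Kmc w * (fX (combine m zm (h • w + xc)) - fX x)‖
        ≤ ‖(L:ℝ) * ‖zm - xm‖ * Kmc w + (L:ℝ) * h * (‖w‖ * Kmc w)‖ := fun w =>
      (hgle' w).trans (le_abs_self _)
    have hg_int : Integrable (fun w : Mis d m → ℝ =>
        Kmc w * (fX (combine m zm (h • w + xc)) - fX x)) :=
      hdom.mono hgmeas (Filter.Eventually.of_forall hgle)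
    have hKf_int : Integrable (fun w : Mis d m → ℝ =>
        Kmc w * fX (combine m zm (h • w + xc))) := by
      refine (hg_int.add (hKmcint.mul_const (fX x))).congr
        (Filter.Eventually.of_forall fun w => by simp only [Pi.add_apply]; ring)
    have hS1 : |S zm - (∫ z, Kmc z) * fX x|
        ≤ (L:ℝ) * (‖zm - xm‖ * (∫ z, Kmc z) + h * (∫ z : Mis d m → ℝ, ‖z‖ * Kmc z)) := by
      have hsub : S zm - (∫ z, Kmc z) * fX x
          = ∫ w : Mis d m → ℝ, Kmc w * (fX (combine m zm (h • w + xc)) - fX x) := by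
        rw [hSdef]; simp only []
        rw [show ((∫ z, Kmc z) * fX x) = ∫ w : Mis d m → ℝ, Kmc w * fX x from
          (integral_mul_const _ _).symm]
        rw [← integral_sub hKf_int (hKmcint.mul_const (fX x))]
        congr 1; funext w; ring
      rw [hsub]
      have habs := norm_integral_le_integral_norm
        (fun w : Mis d m → ℝ => Kmc w * (fX (combine m zm (h • w + xc)) - fX x)) (μ := volume)
      rw [Real.norm_eq_abs] at habs
      refine habs.trans ?_
      have hmono := integral_mono hg_int.norm hdom hgle'
      refine hmono.trans ?_
      rw [integral_add (hKmcint.const_mul _) (hKmcnorm.const_mul _),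
        integral_const_mul, integral_const_mul]
      apply le_of_eq
      ring
    have hS2 : |fXm xm - fXm zm| ≤ (L:ℝ) * ‖zm - xm‖ := by
      have h2 := hfXmLip.dist_le_mul xm zm
      rw [Real.dist_eq, dist_eq_norm, norm_sub_rev] at h2
      exact h2
    have hΦval : fXm zm * Φ zm = Km (h⁻¹ • (zm - xm)) / h ^ dm
        * (S zm - (∫ z, Kmc z) * (fX x / fXm xm) * fXm zm) := by
      have hΦzm : Φ zm = Km (h⁻¹ • (zm - xm)) / fXm zm * F zm / h ^ d
          - (∫ z, Kmc z) / h ^ dm * (Km (h⁻¹ • (zm - xm)) * (fX x / fXm xm)) := rfl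
      rw [hΦzm, hFS zm]
      have hdd : h ^ d = h ^ dm * h ^ dmc := by rw [← pow_add, hcard]
      rw [hdd]
      field_simp
    have habs : fXm zm * |Φ zm| = |fXm zm * Φ zm| := by
      rw [abs_mul, abs_of_nonneg (hfXm0 zm)]
    have hψzm : ψ zm = Km (h⁻¹ • (zm - xm)) / h ^ dm
        * ((L:ℝ) * ((∫ z, Kmc z) * (1 + fX x / fXm xm) * ‖zm - xm‖
          + h * (∫ z : Mis d m → ℝ, ‖z‖ * Kmc z))) := rfl
    rw [habs, hΦval, abs_mul,
      abs_of_nonneg (div_nonneg (hKm0 _) (pow_nonneg hh0.le _)), hψzm]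
    apply mul_le_mul_of_nonneg_left ?_ (div_nonneg (hKm0 _) (pow_nonneg hh0.le _))
    have hkey : S zm - (∫ z, Kmc z) * (fX x / fXm xm) * fXm zm
        = (S zm - (∫ z, Kmc z) * fX x)
          + (∫ z, Kmc z) * (fX x / fXm xm) * (fXm xm - fXm zm) := by
      field_simp
      ring
    calc |S zm - (∫ z, Kmc z) * (fX x / fXm xm) * fXm zm|
        = |(S zm - (∫ z, Kmc z) * fX x)
            + (∫ z, Kmc z) * (fX x / fXm xm) * (fXm xm - fXm zm)| := by rw [hkey]
      _ ≤ |S zm - (∫ z, Kmc z) * fX x|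
            + |(∫ z, Kmc z) * (fX x / fXm xm) * (fXm xm - fXm zm)| := abs_add_le _ _
      _ ≤ (L:ℝ) * (‖zm - xm‖ * (∫ z, Kmc z) + h * (∫ z : Mis d m → ℝ, ‖z‖ * Kmc z))
            + (∫ z, Kmc z) * (fX x / fXm xm) * ((L:ℝ) * ‖zm - xm‖) := by
          apply add_le_add hS1
          rw [abs_mul, abs_of_nonneg (mul_nonneg hμ0mc hc0)]
          exact mul_le_mul_of_nonneg_left hS2 (mul_nonneg hμ0mc hc0)
      _ = (L:ℝ) * ((∫ z, Kmc z) * (1 + fX x / fXm xm) * ‖zm - xm‖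
            + h * (∫ z : Mis d m → ℝ, ‖z‖ * Kmc z)) := by ring
  -- measurability helpers
  have hΦa : Measurable fun z : Fin d → ℝ => ENNReal.ofReal |Φ (projObs m z)| :=
    ENNReal.measurable_ofReal.comp (hΦmeas.comp hprojObs).abs
  have hfXof : Measurable fun z : Fin d → ℝ => ENNReal.ofReal (fX z) :=
    ENNReal.measurable_ofReal.comp hfXcont.measurable
  have hprodfX : Measurable fun p : (Obs d m → ℝ) × (Mis d m → ℝ) =>
      ENNReal.ofReal (fX (combine m p.1 p.2)) :=
    ENNReal.measurable_ofReal.comp (hfXcont.measurable.comp hcombinep)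
  have hprodmeas : Measurable fun p : (Obs d m → ℝ) × (Mis d m → ℝ) =>
      ENNReal.ofReal (fX (combine m p.1 p.2)) * ENNReal.ofReal |Φ p.1| :=
    hprodfX.mul (ENNReal.measurable_ofReal.comp ((hΦmeas.comp measurable_fst).abs))
  have hproj : ∀ (zm : Obs d m → ℝ) (zc : Mis d m → ℝ),
      projObs m (combine m zm zc) = zm := by
    intro zm zc
    funext j
    simp [projObs, combine, j.2]
  -- total mass of fX is 1
  have htot : (∫⁻ z : Fin d → ℝ, ENNReal.ofReal (fX z)) = 1 := by
    have h1 : (Measure.map (X 0) P) Set.univ = 1 := by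
      rw [Measure.map_apply (hXmeas 0) MeasurableSet.univ]
      simp
    rw [hfXdens, withDensity_apply _ MeasurableSet.univ] at h1
    simpa [setLIntegral_univ] using h1
  -- marginal identity (a.e.)
  have hmarg : (∫⁻ zm : Obs d m → ℝ, ∫⁻ zc : Mis d m → ℝ,
      ENNReal.ofReal (fX (combine m zm zc))) = 1 := by
    have h2 := (hep.symm e).lintegral_comp hfXof
    have h3 : (∫⁻ p : (Obs d m → ℝ) × (Mis d m → ℝ),
        ENNReal.ofReal (fX (combine m p.1 p.2)) ∂(volume.prod volume))
        = ∫⁻ z : Fin d → ℝ, ENNReal.ofReal (fX z) := by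
      rw [← Measure.volume_eq_prod, ← h2]
      apply lintegral_congr
      intro p
      rw [show combine m p.1 p.2 = e.symm p by rw [hsymm p.1 p.2]]
    rw [← lintegral_prod _ hprodfX.aemeasurable, h3, htot]
  have hslice_meas : Measurable fun zm : Obs d m → ℝ =>
      ∫⁻ zc : Mis d m → ℝ, ENNReal.ofReal (fX (combine m zm zc)) :=
    hprodfX.lintegral_prod_right'
  have hae : ∀ᵐ zm : Obs d m → ℝ,
      (∫⁻ zc : Mis d m → ℝ, ENNReal.ofReal (fX (combine m zm zc)))
        = ENNReal.ofReal (fXm zm) := by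
    have hfin : ∀ᵐ zm : Obs d m → ℝ, (∫⁻ zc : Mis d m → ℝ,
        ENNReal.ofReal (fX (combine m zm zc))) < ⊤ := by
      apply ae_lt_top hslice_meas
      rw [hmarg]
      exact ENNReal.one_ne_top
    filter_upwards [hfin] with zm hzm
    have hmeasz : Measurable fun zc : Mis d m → ℝ => fX (combine m zm zc) :=
      hfXcont.measurable.comp (hcombinep.comp (measurable_const.prodMk measurable_id))
    have hint : Integrable (fun zc : Mis d m → ℝ => fX (combine m zm zc)) := by
      refine ⟨hmeasz.aestronglyMeasurable, ?_⟩
      rw [hasFiniteIntegral_iff_ofReal (Filter.Eventually.of_forall fun zc => hfX0 _)]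
      exact hzm
    rw [← ofReal_integral_eq_lintegral_ofReal hint
      (Filter.Eventually.of_forall fun zc => hfX0 _), ← hfXm zm]
  -- integrability of the dominating function ψ
  have hKmcomp : Integrable fun zm : Obs d m → ℝ => Km (h⁻¹ • (zm - xm)) := by
    have h7 : Integrable fun v : Obs d m → ℝ => Km (h⁻¹ • v) :=
      (integrable_comp_smul_iff volume Km (inv_ne_zero hhne)).2 hKmint
    exact h7.comp_sub_right xm
  have hKmcompn : Integrable fun zm : Obs d m → ℝ =>
      ‖zm - xm‖ * Km (h⁻¹ • (zm - xm)) := by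
    have h7 : Integrable fun v : Obs d m → ℝ => ‖v‖ * Km (h⁻¹ • v) := by
      have h8 : Integrable fun v : Obs d m → ℝ => ‖h⁻¹ • v‖ * Km (h⁻¹ • v) :=
        (integrable_comp_smul_iff volume (fun z : Obs d m → ℝ => ‖z‖ * Km z)
          (inv_ne_zero hhne)).2 hKmnorm
      refine (h8.const_mul h).congr (Filter.Eventually.of_forall fun v => ?_)
      show h * (‖h⁻¹ • v‖ * Km (h⁻¹ • v)) = ‖v‖ * Km (h⁻¹ • v)
      rw [norm_smul, Real.norm_eq_abs, abs_of_pos (inv_pos.2 hh0)]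
      field_simp
    exact h7.comp_sub_right xm
  have hψint : Integrable ψ := by
    have h7 : ψ = fun zm => ((L:ℝ) * ((∫ z, Kmc z) * (1 + fX x / fXm xm)) / h ^ dm)
        * (‖zm - xm‖ * Km (h⁻¹ • (zm - xm)))
        + ((L:ℝ) * h * (∫ z : Mis d m → ℝ, ‖z‖ * Kmc z) / h ^ dm)
          * Km (h⁻¹ • (zm - xm)) := by
      funext zm
      rw [hψdef]
      ring
    rw [h7]
    exact (hKmcompn.const_mul _).add (hKmcomp.const_mul _)
  have hInt1 : (∫ zm : Obs d m → ℝ, Km (h⁻¹ • (zm - xm))) = h ^ dm * ∫ z, Km z := by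
    have h7 := integral_sub_right_eq_self (μ := volume)
      (fun v : Obs d m → ℝ => Km (h⁻¹ • v)) xm
    rw [h7]
    have h8 := Measure.integral_comp_inv_smul_of_nonneg
      (volume : Measure (Obs d m → ℝ)) Km hh0.le
    rw [hfinro] at h8
    rw [h8, smul_eq_mul]
  have hInt2 : (∫ zm : Obs d m → ℝ, ‖zm - xm‖ * Km (h⁻¹ • (zm - xm)))
      = h ^ dm * (h * ∫ z : Obs d m → ℝ, ‖z‖ * Km z) := by
    have h7 := integral_sub_right_eq_self (μ := volume)
      (fun v : Obs d m → ℝ => ‖v‖ * Km (h⁻¹ • v)) xm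
    rw [h7]
    have h8 := Measure.integral_comp_inv_smul_of_nonneg
      (volume : Measure (Obs d m → ℝ)) (fun v : Obs d m → ℝ => ‖h • v‖ * Km v) hh0.le
    rw [hfinro] at h8
    have h9 : (∫ v : Obs d m → ℝ, ‖v‖ * Km (h⁻¹ • v))
        = ∫ v : Obs d m → ℝ, (fun w : Obs d m → ℝ => ‖h • w‖ * Km w) (h⁻¹ • v) := by
      congr 1
      funext v
      simp only []
      rw [smul_inv_smul₀ hhne]
    rw [h9, h8, smul_eq_mul]
    have h10 : (∫ w : Obs d m → ℝ, ‖h • w‖ * Km w)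
        = h * ∫ w : Obs d m → ℝ, ‖w‖ * Km w := by
      rw [← integral_const_mul]
      congr 1
      funext w
      rw [norm_smul, Real.norm_eq_abs, abs_of_pos hh0]
      ring
    rw [h10]
  have hψval : (∫ zm, ψ zm) = KK * h := by
    have h7 : ∀ zm, ψ zm = ((L:ℝ) * ((∫ z, Kmc z) * (1 + fX x / fXm xm)) / h ^ dm)
        * (‖zm - xm‖ * Km (h⁻¹ • (zm - xm)))
        + ((L:ℝ) * h * (∫ z : Mis d m → ℝ, ‖z‖ * Kmc z) / h ^ dm)
          * Km (h⁻¹ • (zm - xm)) := fun zm => by rw [hψdef]; ring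
    calc (∫ zm, ψ zm) = ∫ zm, (((L:ℝ) * ((∫ z, Kmc z) * (1 + fX x / fXm xm)) / h ^ dm)
          * (‖zm - xm‖ * Km (h⁻¹ • (zm - xm)))
          + ((L:ℝ) * h * (∫ z : Mis d m → ℝ, ‖z‖ * Kmc z) / h ^ dm)
            * Km (h⁻¹ • (zm - xm))) := by
          congr 1
          funext zm
          exact h7 zm
      _ = KK * h := by
          rw [integral_add (hKmcompn.const_mul _) (hKmcomp.const_mul _),
            integral_const_mul, integral_const_mul, hInt1, hInt2, hKKdef]
          have hpow : (h:ℝ) ^ dm ≠ 0 := pow_ne_zero _ hhne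
          field_simp
  have h6 : (∫⁻ zm, ENNReal.ofReal (ψ zm)) = ENNReal.ofReal (KK * h) := by
    rw [← ofReal_integral_eq_lintegral_ofReal hψint (Filter.Eventually.of_forall hψ0), hψval]
  -- the core estimate
  have hcore : (∫⁻ z : Fin d → ℝ, ENNReal.ofReal (fX z) * ENNReal.ofReal |Φ (projObs m z)|)
      ≤ ENNReal.ofReal (KK * h) := by
    have h1 : (∫⁻ z : Fin d → ℝ, ENNReal.ofReal (fX z) * ENNReal.ofReal |Φ (projObs m z)|)
        = ∫⁻ p : (Obs d m → ℝ) × (Mis d m → ℝ),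
            ENNReal.ofReal (fX (combine m p.1 p.2)) * ENNReal.ofReal |Φ p.1|
            ∂(volume.prod volume) := by
      have h2 := (hep.symm e).lintegral_comp (hfXof.mul hΦa)
      simp only [Pi.mul_apply] at h2
      rw [← Measure.volume_eq_prod, ← h2]
      apply lintegral_congr
      intro p
      have h3 : combine m p.1 p.2 = e.symm p := by rw [hsymm p.1 p.2]
      rw [← h3, hproj p.1 p.2]
    have h4 : (∫⁻ p : (Obs d m → ℝ) × (Mis d m → ℝ),
        ENNReal.ofReal (fX (combine m p.1 p.2)) * ENNReal.ofReal |Φ p.1|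
        ∂(volume.prod volume))
        = ∫⁻ zm : Obs d m → ℝ,
            (∫⁻ zc : Mis d m → ℝ, ENNReal.ofReal (fX (combine m zm zc)))
              * ENNReal.ofReal |Φ zm| := by
      rw [lintegral_prod _ hprodmeas.aemeasurable]
      apply lintegral_congr
      intro zm
      have hm1 : Measurable fun zc : Mis d m → ℝ => ENNReal.ofReal (fX (combine m zm zc)) :=
        hprodfX.comp (measurable_const.prodMk measurable_id)
      show (∫⁻ y : Mis d m → ℝ, ENNReal.ofReal (fX (combine m zm y)) * ENNReal.ofReal |Φ zm|) = _
      rw [lintegral_mul_const _ hm1]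
    have h5 : (∫⁻ zm : Obs d m → ℝ,
        (∫⁻ zc : Mis d m → ℝ, ENNReal.ofReal (fX (combine m zm zc)))
          * ENNReal.ofReal |Φ zm|)
        = ∫⁻ zm : Obs d m → ℝ, ENNReal.ofReal (fXm zm) * ENNReal.ofReal |Φ zm| := by
      apply lintegral_congr_ae
      filter_upwards [hae] with zm hzm
      rw [hzm]
    rw [h1, h4, h5, ← h6]
    apply lintegral_mono
    intro zm
    show ENNReal.ofReal (fXm zm) * ENNReal.ofReal |Φ zm| ≤ ENNReal.ofReal (ψ zm)
    rw [← ENNReal.ofReal_mul (hfXm0 zm)]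
    exact ENNReal.ofReal_le_ofReal (hpoint zm)
  -- per-index bound
  have hcoreI : ∀ i, (∫⁻ ω, ENNReal.ofReal |Φ (projObs m (X i ω))| ∂P)
      ≤ ENNReal.ofReal (KK * h) := by
    intro i
    have h1 : (∫⁻ ω, ENNReal.ofReal |Φ (projObs m (X i ω))| ∂P)
        = ∫⁻ z, ENNReal.ofReal |Φ (projObs m z)| ∂(Measure.map (X i) P) :=
      (lintegral_map hΦa (hXmeas i)).symm
    rw [h1, (hXident i).map_eq, hfXdens,
      lintegral_withDensity_eq_lintegral_mul _ hfXof hΦa]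
    simpa using hcore
  -- Markov inequality
  have hXiΦ : ∀ i : ℕ, Measurable fun ω => ENNReal.ofReal |Φ (projObs m (X i ω))| :=
    fun i => hΦa.comp (hXmeas i)
  set G : Ωs → ℝ≥0∞ :=
    fun ω => (n0 n : ℝ≥0∞)⁻¹ * ∑ i ∈ A0 n, ENNReal.ofReal |Φ (projObs m (X i ω))| with hGdef
  have hGmeas : Measurable G := by
    apply Measurable.const_mul
    exact Finset.measurable_sum _ fun i _ => hXiΦ i
  have hsub : {ω | max (KK / ε) 1 * h < |R n h ω|}
      ⊆ {ω | ENNReal.ofReal (max (KK / ε) 1 * h) ≤ G ω} := by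
    intro ω hω
    simp only [Set.mem_setOf_eq] at hω ⊢
    have h1 : |R n h ω| ≤ (n0 n : ℝ)⁻¹ * ∑ i ∈ A0 n, |Φ (projObs m (X i ω))| := by
      rw [hRw ω, abs_mul, abs_of_nonneg (inv_nonneg.2 (Nat.cast_nonneg _))]
      exact mul_le_mul_of_nonneg_left (Finset.abs_sum_le_sum_abs _ _)
        (inv_nonneg.2 (Nat.cast_nonneg _))
    have h2 : ENNReal.ofReal (max (KK / ε) 1 * h)
        ≤ ENNReal.ofReal ((n0 n : ℝ)⁻¹ * ∑ i ∈ A0 n, |Φ (projObs m (X i ω))|) :=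
      ENNReal.ofReal_le_ofReal (le_of_lt (lt_of_lt_of_le hω h1))
    refine h2.trans ?_
    rw [ENNReal.ofReal_mul (inv_nonneg.2 (Nat.cast_nonneg _)),
      ENNReal.ofReal_sum_of_nonneg (fun i _ => abs_nonneg _)]
    rw [hGdef]
    apply mul_le_mul_left
    rcases Nat.eq_zero_or_pos (n0 n) with h3 | h3
    · simp [h3]
    · rw [ENNReal.ofReal_inv_of_pos (by exact_mod_cast h3), ENNReal.ofReal_natCast]
  have hCpos : (0:ℝ) < max (KK / ε) 1 := lt_of_lt_of_le one_pos (le_max_right _ _)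
  calc P {ω | max (KK / ε) 1 * h < |R n h ω|}
      ≤ P {ω | ENNReal.ofReal (max (KK / ε) 1 * h) ≤ G ω} := measure_mono hsub
    _ ≤ (∫⁻ ω, G ω ∂P) / ENNReal.ofReal (max (KK / ε) 1 * h) :=
        meas_ge_le_lintegral_div hGmeas.aemeasurable
          (ENNReal.ofReal_pos.mpr (mul_pos hCpos hh0)).ne' ENNReal.ofReal_ne_top
    _ ≤ ENNReal.ofReal (KK * h) / ENNReal.ofReal (max (KK / ε) 1 * h) := by
        apply ENNReal.div_le_div_right
        have h4 : (∫⁻ ω, G ω ∂P) = (n0 n : ℝ≥0∞)⁻¹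
            * ∑ i ∈ A0 n, ∫⁻ ω, ENNReal.ofReal |Φ (projObs m (X i ω))| ∂P := by
          rw [hGdef]
          rw [lintegral_const_mul _ (Finset.measurable_sum _ fun i _ => hXiΦ i)]
          rw [lintegral_finset_sum _ fun i _ => hXiΦ i]
        rw [h4]
        calc (n0 n : ℝ≥0∞)⁻¹ * ∑ i ∈ A0 n, ∫⁻ ω, ENNReal.ofReal |Φ (projObs m (X i ω))| ∂P
            ≤ (n0 n : ℝ≥0∞)⁻¹ * ∑ _i ∈ A0 n, ENNReal.ofReal (KK * h) :=
              mul_le_mul_right (Finset.sum_le_sum fun i _ => hcoreI i) _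
          _ = (n0 n : ℝ≥0∞)⁻¹ * ((n0 n : ℝ≥0∞) * ENNReal.ofReal (KK * h)) := by
              rw [Finset.sum_const, hn0card n]
              simp [nsmul_eq_mul]
          _ ≤ ENNReal.ofReal (KK * h) := by
              rcases Nat.eq_zero_or_pos (n0 n) with h5 | h5
              · simp [h5]
              · rw [← mul_assoc, ENNReal.inv_mul_cancel
                  (by exact_mod_cast h5.ne' : (n0 n : ℝ≥0∞) ≠ 0)
                  (ENNReal.natCast_ne_top _), one_mul]
    _ ≤ ENNReal.ofReal ε := by
        apply ENNReal.div_le_of_le_mul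
        rw [← ENNReal.ofReal_mul hε.le]
        apply ENNReal.ofReal_le_ofReal
        have h7 : KK ≤ ε * max (KK / ε) 1 := by
          have h8 : KK / ε ≤ max (KK / ε) 1 := le_max_left _ _
          calc KK = ε * (KK / ε) := by field_simp
            _ ≤ ε * max (KK / ε) 1 := mul_le_mul_of_nonneg_left h8 hε.le
        calc KK * h ≤ ε * max (KK / ε) 1 * h :=
              mul_le_mul_of_nonneg_right h7 hh0.le
          _ = ε * (max (KK / ε) 1 * h) := by ring
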